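/- A binary word u of length n belongs to the V-set V({0,1}) if and only if n is a power of 2. -/

import Mathlib

/-- `V` is the V-set `V({0,1})` of nonempty binary words: it contains the two
length-one words `0` and `1`, and a word of length at least `2` is in `V` iff it has
exactly one representation as an ordered concatenation of two (not necessarily
distinct) words of `V`. -/
def IsVFamily (V : Set (List Bool)) : Prop :=
  ∀ u : List Bool, u ∈ V ↔
    (u = [false] ∨ u = [true] ∨
      (2 ≤ u.length ∧ ∃! p : List Bool × List Bool,
        p.1 ∈ V ∧ p.2 ∈ V ∧ p.1 ++ p.2 = u))

lemma two_pow_add_two_pow {a b k : ℕ} (h : 2^a + 2^b = 2^k) : a = b := by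
  by_contra hne
  wlog hab : a < b generalizing a b
  · exact this (by omega) (Ne.symm hne) (by omega)
  have h1 : 2^a * (1 + 2^(b-a)) = 2^k := by
    rw [Nat.mul_add, mul_one, ← pow_add, show a + (b - a) = b from by omega]
    exact h
  have hdvd : (1 + 2^(b-a)) ∣ 2^k := ⟨2^a, by linarith [h1]⟩
  obtain ⟨i, hi, hieq⟩ := (Nat.dvd_prime_pow Nat.prime_two).mp hdvd
  have d1 : 2 ∣ 2^(b-a) := dvd_pow_self 2 (by omega)
  rcases Nat.eq_zero_or_pos i with hi0 | hi1
  · subst hi0; simp at hieq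
  · have d2 : 2 ∣ 2^i := dvd_pow_self 2 (by omega)
    rw [← hieq] at d2
    omega

theorem vset_free_group (V : Set (List Bool)) (hV : IsVFamily V)
    (u : List Bool) (hu : u ≠ []) :
    u ∈ V ↔ ∃ k : ℕ, u.length = 2 ^ k := by
  have hne : ∀ w ∈ V, w ≠ [] := by
    intro w hw hw0
    subst hw0
    rw [hV] at hw
    simp at hw
  suffices H : ∀ n, ∀ u : List Bool, u.length = n → u ≠ [] →
      (u ∈ V ↔ ∃ k, u.length = 2^k) from H u.length u rfl hu
  clear hu u
  intro n
  induction n using Nat.strong_induction_on with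
  | _ n IH =>
  intro u hlen hu0
  rcases Nat.lt_or_ge n 2 with h2 | h2
  · -- n = 1
    have hlp : 0 < u.length := List.length_pos_iff.mpr hu0
    have hn1 : u.length = 1 := by omega
    have hcase : u = [false] ∨ u = [true] := by
      rcases u with _ | ⟨b, t⟩
      · simp at hlp
      · have : t = [] := by simpa using hn1
        subst this
        rcases b <;> simp
    constructor
    · intro _; exact ⟨0, by omega⟩
    · intro _; rw [hV]; tauto
  · -- n ≥ 2
    -- helper: splits have power-of-2 parts
    have hsplit : ∀ q : List Bool × List Bool,
        q.1 ∈ V → q.2 ∈ V → q.1 ++ q.2 = u →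
        ∃ a b : ℕ, q.1.length = 2^a ∧ q.2.length = 2^b ∧ 2^a + 2^b = n := by
      intro q hq1 hq2 hq3
      have hlq : q.1.length + q.2.length = n := by
        rw [← hlen, ← hq3, List.length_append]
      have hq1p : 0 < q.1.length := List.length_pos_iff.mpr (hne _ hq1)
      have hq2p : 0 < q.2.length := List.length_pos_iff.mpr (hne _ hq2)
      obtain ⟨a, ha⟩ := (IH q.1.length (by omega) q.1 rfl (hne _ hq1)).mp hq1
      obtain ⟨b, hb⟩ := (IH q.2.length (by omega) q.2 rfl (hne _ hq2)).mp hq2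
      exact ⟨a, b, ha, hb, by omega⟩
    -- helper: any power-of-2 split position gives parts in V
    have hmk : ∀ m : ℕ, ∀ c d : ℕ, m = 2^c → n - m = 2^d → m < n →
        u.take m ∈ V ∧ u.drop m ∈ V ∧ u.take m ++ u.drop m = u := by
      intro m c d hc hd hmn
      have hm0 : 0 < m := hc ▸ Nat.two_pow_pos c
      have htl : (u.take m).length = m := by
        rw [List.length_take]; omega
      have hdl : (u.drop m).length = n - m := by
        rw [List.length_drop]; omega
      refine ⟨?_, ?_, List.take_append_drop m u⟩
      · refine (IH (u.take m).length (by omega) _ rfl ?_).mpr ⟨c, by omega⟩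
        intro h; rw [h] at htl; simp at htl; omega
      · refine (IH (u.drop m).length (by omega) _ rfl ?_).mpr ⟨d, by omega⟩
        intro h; rw [h] at hdl; simp at hdl; omega
    constructor
    · intro huV
      by_contra hnp
      push_neg at hnp
      rw [hV] at huV
      rcases huV with h | h | ⟨-, p, ⟨hp1, hp2, hp3⟩, hpu⟩
      · rw [h] at hlen; simp at hlen; omega
      · rw [h] at hlen; simp at hlen; omega
      · obtain ⟨a, b, ha, hb, hab⟩ := hsplit p hp1 hp2 hp3
        have hneab : a ≠ b := by
          intro h
          subst h
          exact hnp (a + 1) (by rw [hlen, pow_succ]; omega)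
        -- the swapped split (u.take (2^b), u.drop (2^b)) is another representation
        have hb_lt : 2^b < n := by
          have := Nat.two_pow_pos a; omega
        obtain ⟨hv1, hv2, hv3⟩ := hmk (2^b) b a rfl (by omega) hb_lt
        have hq := hpu (u.take (2^b), u.drop (2^b)) ⟨hv1, hv2, hv3⟩
        have : (u.take (2^b)).length = p.1.length := by rw [← hq]
        rw [ha, List.length_take] at this
        have : 2^b = 2^a := by omega
        exact hneab (Nat.pow_right_injective (by norm_num) this.symm)
    · rintro ⟨k, hk⟩
      rw [hlen] at hk
      have hk1 : 1 ≤ k := by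
        rcases Nat.eq_zero_or_pos k with h | h
        · subst h; simp at hk; omega
        · exact h
      have hhalf : 2^(k-1) + 2^(k-1) = n := by
        rw [hk, ← two_mul, ← pow_succ']
        congr 1
        omega
      have hlt : 2^(k-1) < n := by
        have := Nat.two_pow_pos (k-1); omega
      obtain ⟨hv1, hv2, hv3⟩ := hmk (2^(k-1)) (k-1) (k-1) rfl (by omega) hlt
      rw [hV]
      right; right
      refine ⟨by omega, ⟨(u.take (2^(k-1)), u.drop (2^(k-1))), ⟨hv1, hv2, hv3⟩, ?_⟩⟩
      rintro q ⟨hq1, hq2, hq3⟩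
      obtain ⟨a, b, ha, hb, hab⟩ := hsplit q hq1 hq2 hq3
      have hab' : a = b := two_pow_add_two_pow (by rw [hab, hk])
      subst hab'
      have hak : a = k - 1 := by
        have : 2^(a+1) = 2^k := by rw [pow_succ]; omega
        have := Nat.pow_right_injective (le_refl 2) this
        omega
      subst hak
      have h1 : q.1 = u.take (2^(k-1)) := by
        rw [← hq3, ← ha, List.take_left]
      have h2 : q.2 = u.drop (2^(k-1)) := by
        rw [← hq3, ← ha, List.drop_left]
      exact Prod.ext h1 h2
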